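/- Let f be increasing convex with F(x) = ∫₀ˣ f. For the two-update linear comparison generalized to convex f: for all x₁, x₂, x₃ > 0, DF(x₂, x₁) + DF(x₃, x₂) ≤ DF(x₁ + x₃, x₂), where DF(x,y) = F(x+y) − F(x) − F(y). -/

import Mathlib

open intervalIntegral in
theorem DF_superadditive_merge
    (f : ℝ → ℝ) (hf_mono : Monotone f) (hf_conv : ConvexOn ℝ Set.univ f)
    (F : ℝ → ℝ) (hF : ∀ x, F x = ∫ t in (0:ℝ)..x, f t)
    (DF : ℝ → ℝ → ℝ) (hDF : ∀ x y, DF x y = F (x + y) - F x - F y) :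
    ∀ x₁ x₂ x₃ : ℝ, 0 < x₁ → 0 < x₂ → 0 < x₃ →
      DF x₂ x₁ + DF x₃ x₂ ≤ DF (x₁ + x₃) x₂ := by
  intro x₁ x₂ x₃ h₁ h₂ h₃
  have hint : ∀ a b c : ℝ, IntervalIntegrable (fun t => f (t + c)) MeasureTheory.volume a b := by
    intro a b c
    exact (hf_mono.comp (fun x y hxy => (add_le_add_iff_right c).2 hxy : Monotone (fun t : ℝ => t + c))).intervalIntegrable (μ := MeasureTheory.volume)
  -- key: F (x + y) - F x = ∫ t in 0..y, f (t + x)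
  have key : ∀ x y : ℝ, F (x + y) - F x = ∫ t in (0:ℝ)..y, f (t + x) := by
    intro x y
    rw [hF, hF, intervalIntegral.integral_comp_add_right, zero_add]
    rw [← intervalIntegral.integral_add_adjacent_intervals
      (hf_mono.intervalIntegrable (a := 0) (b := x))
      (hf_mono.intervalIntegrable (a := x) (b := x + y))]
    ring_nf
  -- pointwise convexity inequality
  have ptwise : ∀ t : ℝ, f (t + x₁) + f (t + x₃) ≤ f (t + 0) + f (t + (x₁ + x₃)) := by
    intro t
    have hs : (0:ℝ) < x₁ + x₃ := by linarith
    set lam := x₃ / (x₁ + x₃) with hlam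
    have hl0 : 0 ≤ lam := by positivity
    have hl1 : lam ≤ 1 := by rw [hlam]; rw [div_le_one hs]; linarith
    have e1 : t + x₁ = lam * t + (1 - lam) * (t + (x₁ + x₃)) := by
      field_simp [hlam]
      linear_combination (by rw [hlam]; exact div_mul_cancel₀ x₃ hs.ne' : lam * (x₁ + x₃) = x₃)
    have e2 : t + x₃ = (1 - lam) * t + lam * (t + (x₁ + x₃)) := by
      field_simp [hlam]
      linear_combination (-1 : ℝ) * (by rw [hlam]; exact div_mul_cancel₀ x₃ hs.ne' : lam * (x₁ + x₃) = x₃)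
    have c1 := hf_conv.2 (Set.mem_univ t) (Set.mem_univ (t + (x₁ + x₃))) hl0
      (by linarith : (0:ℝ) ≤ 1 - lam) (by ring)
    have c2 := hf_conv.2 (Set.mem_univ t) (Set.mem_univ (t + (x₁ + x₃)))
      (by linarith : (0:ℝ) ≤ 1 - lam) hl0 (by ring)
    simp only [smul_eq_mul] at c1 c2
    rw [e1, e2]
    calc f (lam * t + (1 - lam) * (t + (x₁ + x₃))) +
        f ((1 - lam) * t + lam * (t + (x₁ + x₃)))
        ≤ (lam * f t + (1 - lam) * f (t + (x₁ + x₃))) +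
          ((1 - lam) * f t + lam * f (t + (x₁ + x₃))) := add_le_add c1 c2
      _ = f (t + 0) + f (t + (x₁ + x₃)) := by rw [add_zero]; ring
  -- integral inequality
  have hmain : (∫ t in (0:ℝ)..x₂, f (t + x₁)) + (∫ t in (0:ℝ)..x₂, f (t + x₃))
      ≤ (∫ t in (0:ℝ)..x₂, f (t + 0)) + (∫ t in (0:ℝ)..x₂, f (t + (x₁ + x₃))) := by
    rw [← intervalIntegral.integral_add (hint 0 x₂ x₁) (hint 0 x₂ x₃),
        ← intervalIntegral.integral_add (hint 0 x₂ 0) (hint 0 x₂ (x₁ + x₃))]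
    apply intervalIntegral.integral_mono_on (le_of_lt h₂)
      ((hint 0 x₂ x₁).add (hint 0 x₂ x₃)) ((hint 0 x₂ 0).add (hint 0 x₂ (x₁ + x₃)))
    intro t _
    exact ptwise t
  -- assemble
  have A1 : F (x₁ + x₂) - F x₁ = ∫ t in (0:ℝ)..x₂, f (t + x₁) := key x₁ x₂
  have A3 : F (x₃ + x₂) - F x₃ = ∫ t in (0:ℝ)..x₂, f (t + x₃) := key x₃ x₂
  have A13 : F (x₁ + x₃ + x₂) - F (x₁ + x₃) = ∫ t in (0:ℝ)..x₂, f (t + (x₁ + x₃)) :=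
    key (x₁ + x₃) x₂
  have A0 : F (0 + x₂) - F 0 = ∫ t in (0:ℝ)..x₂, f (t + 0) := key 0 x₂
  have hF0 : F 0 = 0 := by rw [hF]; simp
  rw [hDF, hDF, hDF]
  have hc1 : F (x₂ + x₁) = F (x₁ + x₂) := by ring_nf
  have hc2 : F (x₃ + x₂) = F (x₃ + x₂) := rfl
  rw [hc1]
  rw [hF0, zero_add] at A0
  linarith [hmain, A1, A3, A13, A0]
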